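/- arXiv:0812.1603 — 11 statements merged into one kernel-verified Lean document; each statement's English description precedes it below -/
import Mathlib

section
/- Let R be a commutative ring, n a finite index type, and γ an invertible n×n matrix over R (its determinant is a unit). If the matrix γᵀ * γ⁻¹ * γᵀ is skew-symmetric, i.e. (γᵀ * γ⁻¹ * γᵀ)ᵀ = −(γᵀ * γ⁻¹ * γᵀ), then (γ⁻¹ * γᵀ)³ = −1 (the negative of the identity matrix). -/
open Matrix

theorem inv_mul_transpose_cube_eq_neg_one {R : Type*} [CommRing R]
    {n : Type*} [Fintype n] [DecidableEq n]
    (γ : Matrix n n R) (hγ : IsUnit γ.det)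
    (hskew : (γᵀ * γ⁻¹ * γᵀ)ᵀ = -(γᵀ * γ⁻¹ * γᵀ)) :
    (γ⁻¹ * γᵀ) ^ 3 = -1 := by
  have hγT : IsUnit γᵀ.det := by rwa [det_transpose]
  rw [transpose_mul, transpose_mul, transpose_transpose, transpose_nonsing_inv] at hskew
  have key : γᵀ * γ⁻¹ * γᵀ = -(γ * (γᵀ⁻¹ * γ)) := by
    have h2 := congrArg Neg.neg hskew; rw [neg_neg] at h2; exact h2.symm
  calc (γ⁻¹ * γᵀ) ^ 3 = γ⁻¹ * (γᵀ * γ⁻¹ * γᵀ) * (γ⁻¹ * γᵀ) := by noncomm_ring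
    _ = γ⁻¹ * -(γ * (γᵀ⁻¹ * γ)) * (γ⁻¹ * γᵀ) := by rw [key]
    _ = -((γ⁻¹ * γ) * γᵀ⁻¹ * (γ * γ⁻¹) * γᵀ) := by noncomm_ring
    _ = -1 := by rw [nonsing_inv_mul _ hγ, mul_nonsing_inv _ hγ, one_mul, mul_one,
          nonsing_inv_mul _ hγT]
end

section
/- Let q be a prime, n ≥ 1, and a an integer such that q does not divide a² − 4. Let γ₁ and γ₂ be invertible 2×2 matrices over ℤ/qⁿℤ (determinant a unit) each satisfying (γᵢ⁻¹ * γᵢᵀ)² = a • (γᵢ⁻¹ * γᵢᵀ) − 1. Then γ₁ and γ₂ are congruent: there exists an invertible 2×2 matrix ψ over ℤ/qⁿℤ such that γ₂ = ψᵀ * γ₁ * ψ. -/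
open Matrix

namespace UGaux

variable {q n : ℕ}

/-! ### Arithmetic in `ZMod (q^n)` -/

lemma one_lt_pow' (hq : q.Prime) (hn : 1 ≤ n) : 1 < q ^ n :=
  Nat.one_lt_pow (by omega) hq.one_lt

lemma nontriv (hq : q.Prime) (hn : 1 ≤ n) : Nontrivial (ZMod (q ^ n)) := by
  haveI : Fact (1 < q ^ n) := ⟨one_lt_pow' hq hn⟩
  infer_instance

lemma q_pow_zero (hq : q.Prime) (hn : 1 ≤ n) : (q : ZMod (q ^ n)) ^ n = 0 := by
  have : ((q ^ n : ℕ) : ZMod (q ^ n)) = 0 := ZMod.natCast_self _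
  push_cast at this
  exact this

lemma nonunit_iff (hq : q.Prime) (hn : 1 ≤ n) (x : ZMod (q ^ n)) :
    ¬ IsUnit x ↔ (q : ZMod (q ^ n)) ∣ x := by
  haveI : NeZero (q ^ n) := ⟨by have := one_lt_pow' hq hn; omega⟩
  haveI := nontriv hq hn
  constructor
  · intro h
    have hx : ((x.val : ℕ) : ZMod (q ^ n)) = x := by
      rw [ZMod.natCast_val, ZMod.cast_id]
    have hnc : ¬ Nat.Coprime x.val (q ^ n) := by
      intro hc
      exact h (hx ▸ (ZMod.isUnit_iff_coprime x.val (q ^ n)).mpr hc)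
    have hqd : q ∣ x.val := by
      by_contra hnd
      exact hnc (Nat.Coprime.pow_right n ((Nat.Prime.coprime_iff_not_dvd hq).mpr hnd).symm)
    obtain ⟨m, hm⟩ := hqd
    exact ⟨(m : ZMod (q ^ n)), by rw [← Nat.cast_mul, ← hm, hx]⟩
  · rintro ⟨y, rfl⟩ h
    have hq' : IsUnit (q : ZMod (q ^ n)) := isUnit_of_mul_isUnit_left h
    have := hq'.pow n
    rw [q_pow_zero hq hn] at this
    exact not_isUnit_zero this

lemma nonunit_mul (hq : q.Prime) (hn : 1 ≤ n) {x : ZMod (q ^ n)} (y : ZMod (q ^ n))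
    (hx : ¬ IsUnit x) : ¬ IsUnit (x * y) := by
  rw [nonunit_iff hq hn] at hx ⊢
  exact hx.mul_right y

lemma nonunit_mul' (hq : q.Prime) (hn : 1 ≤ n) (y : ZMod (q ^ n)) {x : ZMod (q ^ n)}
    (hx : ¬ IsUnit x) : ¬ IsUnit (y * x) := by
  rw [mul_comm]; exact nonunit_mul hq hn y hx

lemma unit_add_nonunit (hq : q.Prime) (hn : 1 ≤ n) {x y : ZMod (q ^ n)}
    (hx : IsUnit x) (hy : ¬ IsUnit y) : IsUnit (x + y) := by
  by_contra h
  rw [nonunit_iff hq hn] at h hy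
  have : (q : ZMod (q ^ n)) ∣ x := by
    have := dvd_sub h hy
    simpa using this
  rw [← nonunit_iff hq hn] at this
  exact this hx

lemma nonunit_add_unit (hq : q.Prime) (hn : 1 ≤ n) {x y : ZMod (q ^ n)}
    (hx : ¬ IsUnit x) (hy : IsUnit y) : IsUnit (x + y) := by
  rw [add_comm]; exact unit_add_nonunit hq hn hy hx

lemma unit_of_sq {R : Type*} [CommMonoid R] {x : R} (h : IsUnit (x ^ 2)) : IsUnit x := by
  obtain ⟨v, hv⟩ := h.exists_right_inv
  exact IsUnit.of_mul_eq_one (a := x) (x * v) (by rw [← mul_assoc, ← pow_two, hv])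

lemma int_unit (hq : q.Prime) (hn : 1 ≤ n) {x : ℤ} (hx : ¬ (q : ℤ) ∣ x) :
    IsUnit ((x : ZMod (q ^ n))) := by
  by_contra h
  rw [nonunit_iff hq hn] at h
  obtain ⟨y, hy⟩ := h
  have hyv : ((y.val : ℕ) : ZMod (q ^ n)) = y := by
    haveI : NeZero (q ^ n) := ⟨by have := one_lt_pow' hq hn; omega⟩
    rw [ZMod.natCast_val, ZMod.cast_id]
  have h0 : ((x - q * (y.val : ℤ) : ℤ) : ZMod (q ^ n)) = 0 := by
    push_cast
    rw [hyv] at *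
    rw [hy]
    push_cast
    ring
  rw [ZMod.intCast_zmod_eq_zero_iff_dvd] at h0
  have hqn : (q : ℤ) ∣ ((q ^ n : ℕ) : ℤ) := by
    push_cast
    exact dvd_pow_self _ (by omega)
  have := (hqn.trans h0)
  exact hx (by have := dvd_add this ⟨(y.val : ℤ), rfl⟩; simpa using this)

/-! ### Hensel-type lemma -/

lemma hensel (hq : q.Prime) (hn : 1 ≤ n) (t b : ZMod (q ^ n)) (hb : ¬ IsUnit b) :
    ∃ x, ¬ IsUnit x ∧ t * x ^ 2 + x + b = 0 := by
  haveI := nontriv hq hn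
  have key : ∀ k : ℕ, 1 ≤ k → ∃ x z : ZMod (q ^ n),
      ¬ IsUnit x ∧ t * x ^ 2 + x + b = (q : ZMod (q ^ n)) ^ k * z := by
    intro k
    induction k with
    | zero => omega
    | succ k ih =>
      intro _
      rcases Nat.lt_or_ge k 1 with hk | hk
      · -- k = 0, base case k+1 = 1
        interval_cases k
        obtain ⟨z, hz⟩ := (nonunit_iff hq hn b).mp hb
        exact ⟨0, z, not_isUnit_zero, by simpa using hz⟩
      · obtain ⟨x, z, hx, hfx⟩ := ih hk
        have hd : IsUnit (1 + 2 * t * x) := by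
          apply unit_add_nonunit hq hn isUnit_one
          exact nonunit_mul' hq hn _ hx
        obtain ⟨w, hw⟩ := hd.exists_right_inv
        refine ⟨x - ((q : ZMod (q ^ n)) ^ k * z) * w,
          (q : ZMod (q ^ n)) ^ (k - 1) * (t * z ^ 2 * w ^ 2), ?_, ?_⟩
        · rw [nonunit_iff hq hn] at hx ⊢
          apply dvd_sub hx
          exact Dvd.dvd.mul_right (Dvd.dvd.mul_right (dvd_pow_self _ (by omega)) z) w
        · have hpow : (q : ZMod (q ^ n)) ^ (k * 2)
              = (q : ZMod (q ^ n)) ^ (k + 1) * (q : ZMod (q ^ n)) ^ (k - 1) := by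
            rw [← pow_add]
            congr 1
            omega
          linear_combination hfx - ((q : ZMod (q ^ n)) ^ k * z) * hw
            + t * z ^ 2 * w ^ 2 * hpow
  obtain ⟨x, z, hx, hfx⟩ := key n hn
  exact ⟨x, hx, by rw [hfx, q_pow_zero hq hn, zero_mul]⟩

/-! ### Representing 1 by a binary quadratic form over `ZMod q` -/

lemma exists_rep_one (q : ℕ) (hq : q.Prime) (p b t : ZMod q) (hp : p ≠ 0)
    (hd : b ^ 2 - 4 * (p * t) ≠ 0) :
    ∃ x y : ZMod q, p * x ^ 2 + b * (x * y) + t * y ^ 2 = 1 := by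
  haveI : Fact q.Prime := ⟨hq⟩
  rcases eq_or_ne q 2 with h2 | h2
  · subst h2
    revert hp hd
    revert p b t
    decide
  · -- q odd prime
    have hcard : Fintype.card (ZMod q) % 2 = 1 := by
      rw [ZMod.card]
      exact Nat.odd_iff.mp (hq.odd_of_ne_two h2)
    have h2ne : (2 : ZMod q) ≠ 0 := by
      intro h
      have : ((2 : ℕ) : ZMod q) = 0 := by push_cast; exact h
      rw [ZMod.natCast_eq_zero_iff] at this
      rcases (Nat.prime_dvd_prime_iff_eq hq Nat.prime_two).mp this with h
      exact h2 h
    set D : ZMod q := t - b ^ 2 / (4 * p) with hD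
    have h4p : (4 : ZMod q) * p ≠ 0 := by
      have h4 : (4 : ZMod q) ≠ 0 := by
        have : (4 : ZMod q) = 2 * 2 := by norm_num
        rw [this]
        exact mul_ne_zero h2ne h2ne
      exact mul_ne_zero h4 hp
    have hDmul : D * (4 * p) = 4 * (p * t) - b ^ 2 := by
      rw [hD, sub_mul, div_mul_cancel₀ _ h4p]
      ring
    have hDne : D ≠ 0 := by
      intro h
      apply hd
      rw [h, zero_mul] at hDmul
      linear_combination hDmul
    obtain ⟨x0, y0, hxy⟩ := FiniteField.exists_root_sum_quadratic
      (f := Polynomial.C p * Polynomial.X ^ 2 + Polynomial.C 0 * Polynomial.X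
        + Polynomial.C (-1))
      (g := Polynomial.C D * Polynomial.X ^ 2 + Polynomial.C 0 * Polynomial.X
        + Polynomial.C 0)
      (Polynomial.degree_quadratic hp) (Polynomial.degree_quadratic hDne) hcard
    simp only [Polynomial.eval_add, Polynomial.eval_mul, Polynomial.eval_pow,
      Polynomial.eval_C, Polynomial.eval_X, zero_mul, add_zero, mul_zero] at hxy
    refine ⟨x0 - b / (2 * p) * y0, y0, ?_⟩
    have h2p : (2 : ZMod q) * p ≠ 0 := mul_ne_zero h2ne hp
    have hexp : p * (x0 - b / (2 * p) * y0) ^ 2 + b * ((x0 - b / (2 * p) * y0) * y0)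
        + t * y0 ^ 2 = p * x0 ^ 2 + D * y0 ^ 2 := by
      rw [hD]
      field_simp
      have h4' : (4 : ZMod q) ≠ 0 := fun h => h4p (by rw [h, zero_mul])
      ring_nf
      rw [inv_mul_cancel_right₀ h4']
    rw [hexp]
    linear_combination hxy


/-! ### Congruence of matrices -/

section CongrSec

variable {S : Type*} [CommRing S]

def Cg (γ γ' : Matrix (Fin 2) (Fin 2) S) : Prop :=
  ∃ ψ : Matrix (Fin 2) (Fin 2) S, IsUnit ψ.det ∧ γ' = ψᵀ * γ * ψ

lemma Cg.refl (γ : Matrix (Fin 2) (Fin 2) S) : Cg γ γ :=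
  ⟨1, by simp, by simp⟩

lemma Cg.trans {γ₁ γ₂ γ₃ : Matrix (Fin 2) (Fin 2) S} (h1 : Cg γ₁ γ₂) (h2 : Cg γ₂ γ₃) :
    Cg γ₁ γ₃ := by
  obtain ⟨ψ, hψ, rfl⟩ := h1
  obtain ⟨φ, hφ, rfl⟩ := h2
  refine ⟨ψ * φ, by rw [Matrix.det_mul]; exact hψ.mul hφ, ?_⟩
  rw [Matrix.transpose_mul]
  simp only [Matrix.mul_assoc]

lemma Cg.symm {γ₁ γ₂ : Matrix (Fin 2) (Fin 2) S} (h : Cg γ₁ γ₂) : Cg γ₂ γ₁ := by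
  obtain ⟨ψ, hψ, rfl⟩ := h
  have h1 : (ψᵀ)⁻¹ * ψᵀ = 1 := Matrix.nonsing_inv_mul _ (by rwa [Matrix.det_transpose])
  have h2 : ψ * ψ⁻¹ = 1 := Matrix.mul_nonsing_inv _ hψ
  refine ⟨ψ⁻¹, Matrix.isUnit_nonsing_inv_det ψ hψ, ?_⟩
  rw [Matrix.transpose_nonsing_inv]
  calc γ₁ = ((ψᵀ)⁻¹ * ψᵀ) * γ₁ * (ψ * ψ⁻¹) := by rw [h1, h2, Matrix.one_mul, Matrix.mul_one]
  _ = (ψᵀ)⁻¹ * (ψᵀ * γ₁ * ψ) * ψ⁻¹ := by simp only [Matrix.mul_assoc]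

lemma sandwich (γ ψ : Matrix (Fin 2) (Fin 2) S) :
    ψᵀ * γ * ψ =
      !![ψ 0 0 * (γ 0 0 * ψ 0 0 + γ 0 1 * ψ 1 0) + ψ 1 0 * (γ 1 0 * ψ 0 0 + γ 1 1 * ψ 1 0),
         ψ 0 0 * (γ 0 0 * ψ 0 1 + γ 0 1 * ψ 1 1) + ψ 1 0 * (γ 1 0 * ψ 0 1 + γ 1 1 * ψ 1 1);
         ψ 0 1 * (γ 0 0 * ψ 0 0 + γ 0 1 * ψ 1 0) + ψ 1 1 * (γ 1 0 * ψ 0 0 + γ 1 1 * ψ 1 0),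
         ψ 0 1 * (γ 0 0 * ψ 0 1 + γ 0 1 * ψ 1 1) + ψ 1 1 * (γ 1 0 * ψ 0 1 + γ 1 1 * ψ 1 1)] := by
  ext i j
  fin_cases i <;> fin_cases j <;>
    · simp [Matrix.mul_apply, Fin.sum_univ_two]
      ring

lemma entry00 (γ ψ : Matrix (Fin 2) (Fin 2) S) :
    (ψᵀ * γ * ψ) 0 0 =
      ψ 0 0 * (γ 0 0 * ψ 0 0 + γ 0 1 * ψ 1 0) + ψ 1 0 * (γ 1 0 * ψ 0 0 + γ 1 1 * ψ 1 0) := by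
  rw [sandwich]
  simp

lemma skew (γ ψ : Matrix (Fin 2) (Fin 2) S) :
    (ψᵀ * γ * ψ) 0 1 - (ψᵀ * γ * ψ) 1 0 = ψ.det * (γ 0 1 - γ 1 0) := by
  rw [sandwich, Matrix.det_fin_two]
  simp only [Matrix.cons_val', Matrix.cons_val_zero, Matrix.cons_val_one, Matrix.head_cons,
    Matrix.empty_val', Matrix.cons_val_fin_one, Matrix.head_fin_const, Matrix.of_apply]
  ring

def Pg (e : S) (γ : Matrix (Fin 2) (Fin 2) S) : Prop :=
  γ 0 1 - γ 1 0 = 1 ∧ γ.det = e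

lemma Pstep {e : S} {γ ψ : Matrix (Fin 2) (Fin 2) S} (hψ : ψ.det = 1) (hP : Pg e γ) :
    Pg e (ψᵀ * γ * ψ) := by
  constructor
  · rw [skew, hψ, one_mul]
    exact hP.1
  · rw [Matrix.det_mul, Matrix.det_mul, Matrix.det_transpose, hψ, mul_one, one_mul]
    exact hP.2

lemma step3 (e : S) (γ : Matrix (Fin 2) (Fin 2) S) (hP : Pg e γ) (hp : IsUnit (γ 0 0)) :
    ∃ t', Cg γ !![γ 0 0, 1; 0, t'] ∧ γ 0 0 * t' = e := by
  obtain ⟨w, hw⟩ := hp.exists_right_inv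
  set yy : S := w * (1 - γ 0 1) with hyy
  set ψ : Matrix (Fin 2) (Fin 2) S := !![1, yy; 0, 1] with hψdef
  have hdψ : ψ.det = 1 := by rw [hψdef, Matrix.det_fin_two_of]; ring
  set t' : S := yy * (γ 0 0 * yy + γ 0 1) + (γ 1 0 * yy + γ 1 1) with ht'
  have key : ψᵀ * γ * ψ = !![γ 0 0, 1; 0, t'] := by
    rw [sandwich]
    ext i j
    fin_cases i <;> fin_cases j <;>
      · simp [hψdef, ht', hyy]
        try ring_nf
        try linear_combination (1 - γ 0 1) * hw
        try linear_combination (1 - γ 0 1) * hw - hP.1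
  have hdet := (Pstep hdψ hP).2
  rw [key, Matrix.det_fin_two_of] at hdet
  exact ⟨t', ⟨ψ, by rw [hdψ]; exact isUnit_one, key.symm⟩, by linear_combination hdet⟩

lemma cond_of_rel (a' : S) (γ : Matrix (Fin 2) (Fin 2) S) (hd : IsUnit γ.det)
    (hrel : (γ⁻¹ * γᵀ) ^ 2 = a' • (γ⁻¹ * γᵀ) - 1) :
    (γ 0 1 - γ 1 0) ^ 2 = (2 - a') * γ.det := by
  have h1 : γ * γ⁻¹ = 1 := Matrix.mul_nonsing_inv γ hd
  have E : γᵀ * γ⁻¹ * γᵀ = a' • γᵀ - γ := by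
    have h2 := congrArg (fun M => γ * M) hrel
    rw [pow_two] at h2
    calc γᵀ * γ⁻¹ * γᵀ = γ * (γ⁻¹ * γᵀ * (γ⁻¹ * γᵀ)) := by
          simp only [← Matrix.mul_assoc]
          rw [h1, Matrix.one_mul]
      _ = γ * (a' • (γ⁻¹ * γᵀ) - 1) := h2
      _ = a' • γᵀ - γ := by
          rw [Matrix.mul_sub, mul_smul_comm, ← Matrix.mul_assoc, h1, Matrix.one_mul,
            Matrix.mul_one]
  have E' : γᵀ * γ.adjugate * γᵀ = (a' * γ.det) • γᵀ - γ.det • γ := by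
    have h3 := congrArg (fun M => γ.det • M) E
    simp only [smul_sub, smul_smul] at h3
    have hadj : γ.det • γ⁻¹ = γ.adjugate := by
      rw [Matrix.inv_def, smul_smul, Ring.mul_inverse_cancel _ hd, one_smul]
    have h4' : γᵀ * γ.adjugate * γᵀ = γ.det • (γᵀ * γ⁻¹ * γᵀ) := by
      rw [← hadj]
      simp only [Matrix.mul_smul, Matrix.smul_mul]
    rw [h4', h3, mul_comm γ.det a']
  have E00 := congrArg (fun M => M 0 0) E'
  have E01 := congrArg (fun M => M 0 1) E'
  simp only [Matrix.mul_apply, Fin.sum_univ_two, Matrix.transpose_apply,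
    Matrix.adjugate_fin_two, Matrix.sub_apply, Matrix.smul_apply, smul_eq_mul,
    Matrix.cons_val', Matrix.cons_val_zero, Matrix.cons_val_one, Matrix.head_cons,
    Matrix.empty_val', Matrix.cons_val_fin_one, Matrix.head_fin_const, Matrix.of_apply]
      at E00 E01
  rw [Matrix.det_fin_two] at E00 E01
  have key : γ.det * ((2 * (γ 0 0 * γ 1 1) - γ 0 1 ^ 2 - γ 1 0 ^ 2) - a' * γ.det) = 0 := by
    rw [Matrix.det_fin_two]
    linear_combination γ 1 1 * E00 - γ 0 1 * E01
  have hY := hd.mul_left_cancel (key.trans (mul_zero γ.det).symm)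
  rw [Matrix.det_fin_two] at hY ⊢
  linear_combination -hY

end CongrSec

/-! ### Normalization steps over `ZMod (q^n)` -/

lemma step1 (hq : q.Prime) (hn : 1 ≤ n) (e : ZMod (q ^ n)) (h4 : IsUnit (1 - 4 * e))
    (γ : Matrix (Fin 2) (Fin 2) (ZMod (q ^ n))) (hP : Pg e γ) :
    ∃ γ', Cg γ γ' ∧ Pg e γ' ∧ IsUnit (γ' 0 0) := by
  by_cases hp : IsUnit (γ 0 0)
  · exact ⟨γ, Cg.refl γ, hP, hp⟩
  by_cases ht : IsUnit (γ 1 1)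
  · set ψ : Matrix (Fin 2) (Fin 2) (ZMod (q ^ n)) := !![0, -1; 1, 0] with hψdef
    have hdψ : ψ.det = 1 := by rw [hψdef, Matrix.det_fin_two_of]; norm_num
    refine ⟨ψᵀ * γ * ψ, ⟨ψ, by rw [hdψ]; exact isUnit_one, rfl⟩, Pstep hdψ hP, ?_⟩
    have hEq : (ψᵀ * γ * ψ) 0 0 = γ 1 1 := by
      rw [entry00, hψdef]
      simp
    rw [hEq]
    exact ht
  · set ψ : Matrix (Fin 2) (Fin 2) (ZMod (q ^ n)) := !![1, 0; 1, 1] with hψdef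
    have hdψ : ψ.det = 1 := by rw [hψdef, Matrix.det_fin_two_of]; norm_num
    refine ⟨ψᵀ * γ * ψ, ⟨ψ, by rw [hdψ]; exact isUnit_one, rfl⟩, Pstep hdψ hP, ?_⟩
    have hdet := hP.2
    rw [Matrix.det_fin_two] at hdet
    have hsq : (γ 0 1 + γ 1 0) ^ 2 = (1 - 4 * e) + 4 * (γ 0 0 * γ 1 1) := by
      linear_combination (γ 0 1 - γ 1 0 + 1) * hP.1 - 4 * hdet
    have hrs : IsUnit (γ 0 1 + γ 1 0) := by
      apply unit_of_sq
      rw [hsq]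
      exact unit_add_nonunit hq hn h4
        (nonunit_mul' hq hn 4 (nonunit_mul hq hn (γ 1 1) hp))
    have hEq : (ψᵀ * γ * ψ) 0 0 = γ 0 1 + γ 1 0 + γ 0 0 + γ 1 1 := by
      rw [entry00, hψdef]
      simp
      ring
    rw [hEq]
    exact unit_add_nonunit hq hn (unit_add_nonunit hq hn hrs hp) ht

lemma step2 (hq : q.Prime) (hn : 1 ≤ n) (e : ZMod (q ^ n)) (h4 : IsUnit (1 - 4 * e))
    (γ : Matrix (Fin 2) (Fin 2) (ZMod (q ^ n))) (hP : Pg e γ) (hp : IsUnit (γ 0 0)) :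
    ∃ γ', Cg γ γ' ∧ Pg e γ' ∧ IsUnit (γ' 0 0) ∧ ¬ IsUnit (γ' 0 0 - 1) := by
  haveI : Fact q.Prime := ⟨hq⟩
  haveI : NeZero q := ⟨hq.pos.ne'⟩
  set φ : ZMod (q ^ n) →+* ZMod q := ZMod.castHom (dvd_pow_self q (by omega)) (ZMod q) with hφ
  have φzero : ∀ x : ZMod (q ^ n), ¬ IsUnit x → φ x = 0 := by
    intro x hx
    obtain ⟨y, rfl⟩ := (nonunit_iff hq hn x).mp hx
    rw [_root_.map_mul, map_natCast, ZMod.natCast_self, zero_mul]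
  have φne : ∀ x : ZMod (q ^ n), IsUnit x → φ x ≠ 0 := by
    intro x hx h0
    have := hx.map φ
    rw [h0] at this
    exact not_isUnit_zero this
  have hdet := hP.2
  rw [Matrix.det_fin_two] at hdet
  have hdisc : (γ 0 1 + γ 1 0) ^ 2 - 4 * (γ 0 0 * γ 1 1) = 1 - 4 * e := by
    linear_combination (γ 0 1 - γ 1 0 + 1) * hP.1 - 4 * hdet
  obtain ⟨xb, yb, hxy⟩ := exists_rep_one q hq (φ (γ 0 0)) (φ (γ 0 1 + γ 1 0)) (φ (γ 1 1))
    (φne _ hp) (by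
      have hmap : φ (γ 0 1 + γ 1 0) ^ 2 - 4 * (φ (γ 0 0) * φ (γ 1 1)) = φ (1 - 4 * e) := by
        rw [← hdisc]
        simp only [map_sub, map_pow, _root_.map_mul, map_add, _root_.map_one, map_ofNat]
      rw [hmap]
      exact φne _ h4)
  set x : ZMod (q ^ n) := (xb.val : ZMod (q ^ n)) with hx
  set y : ZMod (q ^ n) := (yb.val : ZMod (q ^ n)) with hy
  have hφx : φ x = xb := by
    rw [hx, map_natCast, ZMod.natCast_val, ZMod.cast_id]
  have hφy : φ y = yb := by
    rw [hy, map_natCast, ZMod.natCast_val, ZMod.cast_id]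
  set Q : ZMod (q ^ n) := γ 0 0 * x ^ 2 + (γ 0 1 + γ 1 0) * (x * y) + γ 1 1 * y ^ 2 with hQ
  have hxy' : φ (γ 0 0) * xb ^ 2 + (φ (γ 0 1) + φ (γ 1 0)) * (xb * yb)
      + φ (γ 1 1) * yb ^ 2 = 1 := by
    rw [← map_add]
    exact hxy
  have hφQ : φ (Q - 1) = 0 := by
    have hstep : φ (Q - 1) = φ (γ 0 0) * (φ x) ^ 2 + (φ (γ 0 1) + φ (γ 1 0)) * (φ x * φ y)
        + φ (γ 1 1) * (φ y) ^ 2 - 1 := by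
      rw [hQ]
      simp only [map_sub, map_add, _root_.map_mul, map_pow, _root_.map_one]
    rw [hstep, hφx, hφy, hxy', sub_self]
  have hQ1 : ¬ IsUnit (Q - 1) := fun hu => φne _ hu hφQ
  have hprim : IsUnit x ∨ IsUnit y := by
    by_contra hcon
    push_neg at hcon
    have h1 : xb = 0 := by rw [← hφx]; exact φzero _ hcon.1
    have h2 : yb = 0 := by rw [← hφy]; exact φzero _ hcon.2
    rw [h1, h2] at hxy
    simpa using hxy
  obtain hxu | hyu := hprim
  · obtain ⟨w, hw⟩ := hxu.exists_right_inv
    set ψ : Matrix (Fin 2) (Fin 2) (ZMod (q ^ n)) := !![x, 0; y, w] with hψdef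
    have hdψ : ψ.det = 1 := by rw [hψdef, Matrix.det_fin_two_of]; linear_combination hw
    have hEq : (ψᵀ * γ * ψ) 0 0 = Q := by
      rw [entry00, hψdef, hQ]
      simp
      ring
    refine ⟨ψᵀ * γ * ψ, ⟨ψ, by rw [hdψ]; exact isUnit_one, rfl⟩, Pstep hdψ hP, ?_, ?_⟩
    · rw [hEq, show Q = (Q - 1) + 1 by ring]
      exact nonunit_add_unit hq hn hQ1 isUnit_one
    · rw [hEq]
      exact hQ1
  · obtain ⟨w, hw⟩ := hyu.exists_right_inv
    set ψ : Matrix (Fin 2) (Fin 2) (ZMod (q ^ n)) := !![x, -w; y, 0] with hψdef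
    have hdψ : ψ.det = 1 := by rw [hψdef, Matrix.det_fin_two_of]; linear_combination hw
    have hEq : (ψᵀ * γ * ψ) 0 0 = Q := by
      rw [entry00, hψdef, hQ]
      simp
      ring
    refine ⟨ψᵀ * γ * ψ, ⟨ψ, by rw [hdψ]; exact isUnit_one, rfl⟩, Pstep hdψ hP, ?_, ?_⟩
    · rw [hEq, show Q = (Q - 1) + 1 by ring]
      exact nonunit_add_unit hq hn hQ1 isUnit_one
    · rw [hEq]
      exact hQ1

lemma step4 (hq : q.Prime) (hn : 1 ≤ n) (e p t' : ZMod (q ^ n)) (hpt : p * t' = e)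
    (hp1 : ¬ IsUnit (p - 1)) :
    ∃ γ', Cg !![p, 1; 0, t'] γ' ∧ Pg e γ' ∧ γ' 0 0 = 1 := by
  obtain ⟨xx, hxx, hxeq⟩ := hensel hq hn t' (p - 1) hp1
  set ψ : Matrix (Fin 2) (Fin 2) (ZMod (q ^ n)) := !![1, 0; xx, 1] with hψdef
  have hdψ : ψ.det = 1 := by rw [hψdef, Matrix.det_fin_two_of]; ring
  have hPin : Pg e !![p, 1; 0, t'] := by
    constructor
    · simp
    · rw [Matrix.det_fin_two_of]; linear_combination hpt
  refine ⟨ψᵀ * !![p, 1; 0, t'] * ψ, ⟨ψ, by rw [hdψ]; exact isUnit_one, rfl⟩,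
    Pstep hdψ hPin, ?_⟩
  rw [entry00, hψdef]
  simp
  linear_combination hxeq

lemma reduce (hq : q.Prime) (hn : 1 ≤ n) (u e : ZMod (q ^ n)) (hue : u * e = 1)
    (h4 : IsUnit (1 - 4 * e))
    (γ : Matrix (Fin 2) (Fin 2) (ZMod (q ^ n))) (hd : IsUnit γ.det)
    (hc : (γ 0 1 - γ 1 0) ^ 2 = u * γ.det) :
    Cg γ !![1, 1; 0, e] := by
  have hu : IsUnit u := IsUnit.of_mul_eq_one _ hue
  have hcu : IsUnit (γ 0 1 - γ 1 0) := unit_of_sq (by rw [hc]; exact hu.mul hd)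
  obtain ⟨w, hw⟩ := hcu.exists_right_inv
  set ψ₀ : Matrix (Fin 2) (Fin 2) (ZMod (q ^ n)) := !![w, 0; 0, 1] with hψ₀def
  have hdψ₀ : ψ₀.det = w := by rw [hψ₀def, Matrix.det_fin_two_of]; ring
  have hψ₀u : IsUnit ψ₀.det := by
    rw [hdψ₀]
    exact IsUnit.of_mul_eq_one (a := w) (γ 0 1 - γ 1 0) (by linear_combination hw)
  set γ₁ := ψ₀ᵀ * γ * ψ₀ with hγ₁
  have hP1 : Pg e γ₁ := by
    constructor
    · rw [hγ₁, skew, hdψ₀]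
      linear_combination hw
    · have h1 : u * (w ^ 2 * γ.det) = 1 := by
        linear_combination (-(w ^ 2)) * hc + ((γ 0 1 - γ 1 0) * w + 1) * hw
      have h2 : u * (w ^ 2 * γ.det) = u * e := by rw [h1, hue]
      have h3 := hu.mul_left_cancel h2
      rw [hγ₁, Matrix.det_mul, Matrix.det_mul, Matrix.det_transpose, hdψ₀]
      linear_combination h3
  have hCg1 : Cg γ γ₁ := ⟨ψ₀, hψ₀u, rfl⟩
  obtain ⟨γ₂, hC2, hP2, hp2⟩ := step1 hq hn e h4 γ₁ hP1
  obtain ⟨γ₃, hC3, hP3, hp3, hp3'⟩ := step2 hq hn e h4 γ₂ hP2 hp2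
  obtain ⟨t', hC4, hpt⟩ := step3 e γ₃ hP3 hp3
  obtain ⟨γ₅, hC5, hP5, hp5⟩ := step4 hq hn e (γ₃ 0 0) t' hpt hp3'
  obtain ⟨t'', hC6, ht''⟩ := step3 e γ₅ hP5 (by rw [hp5]; exact isUnit_one)
  rw [hp5] at hC6 ht''
  rw [one_mul] at ht''
  subst ht''
  exact hCg1.trans (hC2.trans (hC3.trans (hC4.trans (hC5.trans hC6))))

end UGaux

theorem unique_gamma_with_quadratic_relation (q n : ℕ) (hq : q.Prime) (hn : 1 ≤ n)
    (a : ℤ) (ha : ¬ (q : ℤ) ∣ a ^ 2 - 4)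
    (γ₁ γ₂ : Matrix (Fin 2) (Fin 2) (ZMod (q ^ n)))
    (h₁ : IsUnit γ₁.det) (h₂ : IsUnit γ₂.det)
    (hrel₁ : (γ₁⁻¹ * γ₁ᵀ) ^ 2 = (a : ZMod (q ^ n)) • (γ₁⁻¹ * γ₁ᵀ) - 1)
    (hrel₂ : (γ₂⁻¹ * γ₂ᵀ) ^ 2 = (a : ZMod (q ^ n)) • (γ₂⁻¹ * γ₂ᵀ) - 1) :
    ∃ ψ : Matrix (Fin 2) (Fin 2) (ZMod (q ^ n)),
      IsUnit ψ.det ∧ γ₂ = ψᵀ * γ₁ * ψ := by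
  have hqd2 : ¬ (q : ℤ) ∣ (a - 2) := fun h => ha (by
    rw [show a ^ 2 - 4 = (a - 2) * (a + 2) by ring]
    exact h.mul_right _)
  have hqd2' : ¬ (q : ℤ) ∣ (a + 2) := fun h => ha (by
    rw [show a ^ 2 - 4 = (a - 2) * (a + 2) by ring]
    exact h.mul_left _)
  have h2a : IsUnit ((2 : ZMod (q ^ n)) - (a : ZMod (q ^ n))) := by
    have h := UGaux.int_unit hq hn hqd2
    push_cast at h
    rw [show (2 : ZMod (q ^ n)) - (a : ZMod (q ^ n)) = -((a : ZMod (q ^ n)) - 2) by ring]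
    exact h.neg
  have h2a' : IsUnit ((a : ZMod (q ^ n)) + 2) := by
    have h := UGaux.int_unit hq hn hqd2'
    push_cast at h
    exact h
  obtain ⟨e, he⟩ := h2a.exists_right_inv
  have h4 : IsUnit (1 - 4 * e) := by
    have hkey : ((2 : ZMod (q ^ n)) - (a : ZMod (q ^ n))) * (1 - 4 * e)
        = -((a : ZMod (q ^ n)) + 2) := by
      linear_combination (-4 : ZMod (q ^ n)) * he
    have : IsUnit (((2 : ZMod (q ^ n)) - (a : ZMod (q ^ n))) * (1 - 4 * e)) := by
      rw [hkey]
      exact h2a'.neg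
    exact isUnit_of_mul_isUnit_right this
  have hc₁ := UGaux.cond_of_rel ((a : ZMod (q ^ n))) γ₁ h₁ hrel₁
  have hc₂ := UGaux.cond_of_rel ((a : ZMod (q ^ n))) γ₂ h₂ hrel₂
  have hr₁ := UGaux.reduce hq hn (2 - (a : ZMod (q ^ n))) e he h4 γ₁ h₁ hc₁
  have hr₂ := UGaux.reduce hq hn (2 - (a : ZMod (q ^ n))) e he h4 γ₂ h₂ hc₂
  obtain ⟨ψ, hψ, hψeq⟩ := hr₁.trans hr₂.symm
  exact ⟨ψ, hψ, hψeq⟩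
end

section
/- Let q be a prime, n ≥ 1, and a an integer such that q does not divide a² − 4. Let γ be an invertible 2×2 matrix over ℤ/qⁿℤ (determinant a unit) such that x := γ⁻¹ * γᵀ satisfies x² = a • x − 1. Then the reduction of x modulo q (obtained by applying the canonical ring homomorphism ℤ/qⁿℤ → ℤ/qℤ to every entry) is not a scalar matrix, i.e. there is no c in ℤ/qℤ such that this reduction equals c • 1. -/
open Matrix

theorem reduction_not_scalar (q n : ℕ) (hq : q.Prime) (hn : 1 ≤ n)
    (a : ℤ) (ha : ¬ (q : ℤ) ∣ a ^ 2 - 4)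
    (γ : Matrix (Fin 2) (Fin 2) (ZMod (q ^ n))) (hγ : IsUnit γ.det)
    (hrel : (γ⁻¹ * γᵀ) ^ 2 = (a : ZMod (q ^ n)) • (γ⁻¹ * γᵀ) - 1) :
    ¬ ∃ c : ZMod q,
      (γ⁻¹ * γᵀ).map (ZMod.castHom (dvd_pow_self q (Nat.one_le_iff_ne_zero.mp hn)) (ZMod q))
        = c • (1 : Matrix (Fin 2) (Fin 2) (ZMod q)) := by
  haveI := Fact.mk hq
  rintro ⟨c, hc⟩
  set h : ZMod (q ^ n) →+* ZMod q :=
    ZMod.castHom (dvd_pow_self q (Nat.one_le_iff_ne_zero.mp hn)) (ZMod q)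
  set F : Matrix (Fin 2) (Fin 2) (ZMod (q ^ n)) →+* Matrix (Fin 2) (Fin 2) (ZMod q) :=
    h.mapMatrix
  have hFx : F (γ⁻¹ * γᵀ) = c • 1 := hc
  -- γ * (γ⁻¹ * γᵀ) = γᵀ
  have key : γ * (γ⁻¹ * γᵀ) = γᵀ := by
    rw [← Matrix.mul_assoc, Matrix.mul_nonsing_inv γ hγ, Matrix.one_mul]
  have key2 : (F γ)ᵀ = c • F γ := by
    have := congrArg F key
    rw [_root_.map_mul, hFx] at this
    have ht : F γᵀ = (F γ)ᵀ := rfl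
    rw [ht] at this
    rw [← this]
    simp [Matrix.mul_smul, Matrix.mul_one]
  have key3 : F γ = (c * c) • F γ := by
    have := congrArg Matrix.transpose key2
    rw [Matrix.transpose_transpose, Matrix.transpose_smul, key2, smul_smul] at this
    exact this
  have hdet : IsUnit (F γ).det := by
    rw [show (F γ).det = h γ.det from (h.map_det γ).symm]
    exact hγ.map h
  have hc2 : c * c = 1 := by
    have h1 : (1 : Matrix (Fin 2) (Fin 2) (ZMod q)) = (c * c) • 1 := by
      calc (1 : Matrix (Fin 2) (Fin 2) (ZMod q)) = F γ * (F γ)⁻¹ :=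
            (Matrix.mul_nonsing_inv _ hdet).symm
        _ = ((c * c) • F γ) * (F γ)⁻¹ := by rw [← key3]
        _ = (c * c) • (F γ * (F γ)⁻¹) := by rw [Matrix.smul_mul]
        _ = (c * c) • 1 := by rw [Matrix.mul_nonsing_inv _ hdet]
    have := congrFun (congrFun h1 0) 0
    simpa [Matrix.one_apply] using this.symm
  -- reduce the relation
  have hrel' : (c * c) • (1 : Matrix (Fin 2) (Fin 2) (ZMod q))
      = ((a : ZMod q) * c) • 1 - 1 := by
    have := congrArg F hrel
    rw [map_pow, map_sub, _root_.map_one, hFx] at this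
    have hsm : F ((a : ZMod (q ^ n)) • (γ⁻¹ * γᵀ)) = (a : ZMod q) • (c • 1) := by
      have heq2 : F ((a : ZMod (q ^ n)) • (γ⁻¹ * γᵀ))
          = (h (a : ZMod (q ^ n))) • F (γ⁻¹ * γᵀ) := Matrix.map_smul' _ _ _ h.map_mul
      rw [heq2, hFx, map_intCast]
    rw [hsm] at this
    rw [smul_smul, mul_comm] at this
    calc (c * c) • (1 : Matrix (Fin 2) (Fin 2) (ZMod q)) = (c • 1) * (c • 1) := by
          rw [Matrix.smul_mul, Matrix.mul_smul, Matrix.one_mul, smul_smul]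
      _ = (c • 1) ^ 2 := (sq _).symm
      _ = ((a : ZMod q) * c) • 1 - 1 := by rw [this, mul_comm]
  have heq : c * c = (a : ZMod q) * c - 1 := by
    have := congrFun (congrFun hrel' 0) 0
    simpa [Matrix.one_apply] using this
  have hac : (a : ZMod q) * c = 2 := by
    rw [hc2] at heq
    linear_combination -heq
  have haq : (a : ZMod q) = 2 * c := by
    have : (a : ZMod q) * (c * c) = 2 * c := by rw [← mul_assoc, hac]
    rwa [hc2, mul_one] at this
  apply ha
  rw [← ZMod.intCast_zmod_eq_zero_iff_dvd]
  push_cast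
  rw [haq]
  ring_nf
  rw [mul_comm c c] at hc2
  linear_combination 4 * hc2
end

section
/- Let q be a prime, n ≥ 1, and a an element of ℤ/qⁿℤ. Let x be a 2×2 matrix over ℤ/qⁿℤ with trace a and determinant 1, and suppose that the reduction of x modulo q (applying the canonical ring homomorphism ℤ/qⁿℤ → ℤ/qℤ to every entry) is not a scalar matrix. Then x is conjugate over ℤ/qⁿℤ to the matrix !![a, 1; −1, 0]: there exists an invertible 2×2 matrix P over ℤ/qⁿℤ with P * x * P⁻¹ = !![a, 1; −1, 0]. -/
open Matrix

lemma isUnit_of_castHom_ne_zero (q n : ℕ) (hq : q.Prime) (hn : n ≠ 0)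
    (u : ZMod (q ^ n)) (h : ZMod.castHom (dvd_pow_self q hn) (ZMod q) u ≠ 0) :
    IsUnit u := by
  haveI : NeZero (q ^ n) := ⟨pow_ne_zero n hq.pos.ne'⟩
  haveI : NeZero q := ⟨hq.pos.ne'⟩
  have hu : ((u.val : ℕ) : ZMod (q ^ n)) = u := by
    rw [ZMod.natCast_val, ZMod.cast_id]
  rw [← hu, ZMod.isUnit_iff_coprime]
  have hcast : (ZMod.castHom (dvd_pow_self q hn) (ZMod q) u) = ((u.val : ℕ) : ZMod q) := by
    rw [ZMod.castHom_apply, ← ZMod.natCast_val]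
  rw [hcast, Ne, ZMod.natCast_eq_zero_iff] at h
  exact Nat.Coprime.pow_right n ((Nat.coprime_comm.mp ((hq.coprime_iff_not_dvd).mpr h)))

theorem conjugate_to_companion (q n : ℕ) (hq : q.Prime) (hn : 1 ≤ n)
    (a : ZMod (q ^ n)) (x : Matrix (Fin 2) (Fin 2) (ZMod (q ^ n)))
    (htr : x.trace = a) (hdet : x.det = 1)
    (hns : ¬ ∃ c : ZMod q,
      x.map (ZMod.castHom (dvd_pow_self q (Nat.one_le_iff_ne_zero.mp hn)) (ZMod q))
        = c • (1 : Matrix (Fin 2) (Fin 2) (ZMod q))) :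
    ∃ P : Matrix (Fin 2) (Fin 2) (ZMod (q ^ n)),
      IsUnit P.det ∧ P * x * P⁻¹ = !![a, 1; -1, 0] := by
  set f := ZMod.castHom (dvd_pow_self q (Nat.one_le_iff_ne_zero.mp hn)) (ZMod q) with hf
  rw [Matrix.trace_fin_two] at htr
  rw [Matrix.det_fin_two] at hdet
  obtain ⟨v0, v1, hv⟩ : ∃ v0 v1 : ZMod (q ^ n),
      f (((x 0 0) * v0 + (x 0 1) * v1) * v1 - v0 * ((x 1 0) * v0 + (x 1 1) * v1)) ≠ 0 := by
    by_cases h10 : f (x 1 0) ≠ 0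
    · exact ⟨1, 0, by simpa using h10⟩
    by_cases h01 : f (x 0 1) ≠ 0
    · exact ⟨0, 1, by simpa using h01⟩
    push_neg at h10 h01
    refine ⟨1, 1, ?_⟩
    have hne : f (x 0 0) ≠ f (x 1 1) := by
      intro heq
      apply hns
      refine ⟨f (x 0 0), ?_⟩
      ext i j
      fin_cases i <;> fin_cases j <;>
        simp [Matrix.map_apply, Matrix.one_apply, h10, h01, heq]
    intro h
    apply hne
    have h' : f (x 0 0) + f (x 0 1) - (f (x 1 0) + f (x 1 1)) = 0 := by
      simpa using h
    rw [h10, h01] at h'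
    linear_combination h'
  have hQdet : (!![(x 0 0) * v0 + (x 0 1) * v1, v0;
        (x 1 0) * v0 + (x 1 1) * v1, v1] : Matrix (Fin 2) (Fin 2) (ZMod (q ^ n))).det
      = ((x 0 0) * v0 + (x 0 1) * v1) * v1 - v0 * ((x 1 0) * v0 + (x 1 1) * v1) := by
    rw [Matrix.det_fin_two]; simp
  have hQ : IsUnit (!![(x 0 0) * v0 + (x 0 1) * v1, v0;
      (x 1 0) * v0 + (x 1 1) * v1, v1] : Matrix (Fin 2) (Fin 2) (ZMod (q ^ n))).det := by
    apply isUnit_of_castHom_ne_zero q n hq (Nat.one_le_iff_ne_zero.mp hn)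
    rw [hQdet]; exact hv
  have hxQ : x * !![(x 0 0) * v0 + (x 0 1) * v1, v0; (x 1 0) * v0 + (x 1 1) * v1, v1]
      = !![(x 0 0) * v0 + (x 0 1) * v1, v0; (x 1 0) * v0 + (x 1 1) * v1, v1]
        * !![a, 1; -1, 0] := by
    ext i j
    fin_cases i <;> fin_cases j <;> simp [Matrix.mul_apply, Fin.sum_univ_two]
    · linear_combination (x 0 0 * v0 + x 0 1 * v1) * htr - v0 * hdet
    · linear_combination (x 1 0 * v0 + x 1 1 * v1) * htr - v1 * hdet
  refine ⟨(!![(x 0 0) * v0 + (x 0 1) * v1, v0; (x 1 0) * v0 + (x 1 1) * v1, v1])⁻¹,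
    Matrix.isUnit_nonsing_inv_det _ hQ, ?_⟩
  rw [Matrix.nonsing_inv_nonsing_inv _ hQ, Matrix.mul_assoc, hxQ, ← Matrix.mul_assoc,
    Matrix.nonsing_inv_mul _ hQ, Matrix.one_mul]
end

section
/- Let q be a prime and let a, d be elements of ℤ/qℤ with a² ≠ 4 and d ≠ 0. Then there exist y, t in ℤ/qℤ such that y² + a*y*t + t² = d and 2*y + a*t ≠ 0. -/
open Polynomial

lemma aux_sq_add_mul_sq (q : ℕ) (hq : q.Prime) (hodd : q % 2 = 1) (hq3 : q ≠ 3)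
    (c d : ZMod q) (hc : c ≠ 0) (hd : d ≠ 0) :
    ∃ u t : ZMod q, u ^ 2 + c * t ^ 2 = d ∧ u ≠ 0 := by
  haveI : Fact q.Prime := ⟨hq⟩
  have hq2 : q ≠ 2 := by rintro rfl; simp at hodd
  have h2 : (2 : ZMod q) ≠ 0 := by
    have : ((2 : ℕ) : ZMod q) ≠ 0 := by
      rw [Ne, ZMod.natCast_eq_zero_iff]
      intro h
      exact hq2 ((Nat.prime_dvd_prime_iff_eq hq Nat.prime_two).mp h)
    simpa using this
  have h3 : (3 : ZMod q) ≠ 0 := by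
    have : ((3 : ℕ) : ZMod q) ≠ 0 := by
      rw [Ne, ZMod.natCast_eq_zero_iff]
      intro h
      exact hq3 ((Nat.prime_dvd_prime_iff_eq hq Nat.prime_three).mp h)
    simpa using this
  -- get some solution
  obtain ⟨u, t, hut⟩ : ∃ u t : ZMod q,
      (X ^ 2 : (ZMod q)[X]).eval u + (C c * X ^ 2 - C d).eval t = 0 := by
    apply FiniteField.exists_root_sum_quadratic (degree_X_pow 2)
    · compute_degree!
    · rw [ZMod.card, hodd]
  simp only [eval_add, eval_sub, eval_mul, eval_pow, eval_X, eval_C] at hut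
  have hsol : u ^ 2 + c * t ^ 2 = d := by linear_combination hut
  by_cases hu : u ≠ 0
  · exact ⟨u, t, hsol, hu⟩
  push_neg at hu
  subst hu
  have ht : t ≠ 0 := by
    rintro rfl
    simp at hsol
    exact hd hsol.symm
  -- choose m ≠ 0 with 1 + c * m ^ 2 ≠ 0
  obtain ⟨m, hm0, hm⟩ : ∃ m : ZMod q, m ≠ 0 ∧ 1 + c * m ^ 2 ≠ 0 := by
    by_cases h1 : 1 + c * 1 ^ 2 ≠ 0
    · exact ⟨1, one_ne_zero, h1⟩
    · push_neg at h1
      refine ⟨2, h2, fun h4 => ?_⟩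
      have : (3 : ZMod q) = 0 := by linear_combination 4 * h1 - h4
      exact h3 this
  set w : ZMod q := -(2 * c * t * m) / (1 + c * m ^ 2) with hw
  have hwne : w ≠ 0 := by
    apply div_ne_zero
    · intro h
      rcases mul_eq_zero.mp (neg_eq_zero.mp h) with h' | h'
      · rcases mul_eq_zero.mp h' with h'' | h''
        · rcases mul_eq_zero.mp h'' with h''' | h'''
          · exact h2 h'''
          · exact hc h'''
        · exact ht h''
      · exact hm0 h'
    · exact hm
  refine ⟨w, t + m * w, ?_, hwne⟩
  have hkey : w * (1 + c * m ^ 2) = -(2 * c * t * m) := by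
    rw [hw, div_mul_cancel₀ _ hm]
  have hct : c * t ^ 2 = d := by linear_combination hsol
  linear_combination w * hkey + hct

theorem exists_representation_mod_q (q : ℕ) (hq : q.Prime) (a d : ZMod q)
    (ha : a ^ 2 ≠ 4) (hd : d ≠ 0) :
    ∃ y t : ZMod q, y ^ 2 + a * y * t + t ^ 2 = d ∧ 2 * y + a * t ≠ 0 := by
  haveI : Fact q.Prime := ⟨hq⟩
  by_cases hq2 : q = 2
  · subst hq2; revert ha hd; revert a d; decide
  by_cases hq3 : q = 3
  · subst hq3; revert ha hd; revert a d; decide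
  have hodd : q % 2 = 1 := hq.eq_two_or_odd.resolve_left hq2
  have h2 : (2 : ZMod q) ≠ 0 := by
    have : ((2 : ℕ) : ZMod q) ≠ 0 := by
      rw [Ne, ZMod.natCast_eq_zero_iff]
      intro h
      exact hq2 ((Nat.prime_dvd_prime_iff_eq hq Nat.prime_two).mp h)
    simpa using this
  have h4 : (4 : ZMod q) ≠ 0 := by
    intro h
    have : (2 : ZMod q) * 2 = 0 := by linear_combination h
    rcases mul_eq_zero.mp this with h' | h' <;> exact h2 h'
  have hc : (4 - a ^ 2) / 4 ≠ 0 := by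
    apply div_ne_zero _ h4
    intro h
    exact ha (by linear_combination -h)
  obtain ⟨u, t, hut, hu⟩ := aux_sq_add_mul_sq q hq hodd hq3 ((4 - a ^ 2) / 4) d hc hd
  have h1 : (4 - a ^ 2) / 4 * 4 = 4 - a ^ 2 := div_mul_cancel₀ _ h4
  have h2' : a * t / 2 * 2 = a * t := div_mul_cancel₀ _ h2
  have h2i : (2 : ZMod q)⁻¹ * 2 = 1 := inv_mul_cancel₀ h2
  have h4i : (4 : ZMod q)⁻¹ * 4 = 1 := inv_mul_cancel₀ h4
  have hut' : 4 * u ^ 2 + (4 - a ^ 2) * t ^ 2 = 4 * d := by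
    linear_combination 4 * hut + t ^ 2 * h1 + (2 * a ^ 2 * t ^ 2 - 8 * t ^ 2) * h4i
  have hy : 2 * (u - a * t / 2) = 2 * u - a * t := by linear_combination -h2'
  refine ⟨u - a * t / 2, t, ?_, ?_⟩
  · have key : 4 * ((u - a * t / 2) ^ 2 + a * (u - a * t / 2) * t + t ^ 2) = 4 * d := by
      linear_combination hut' + (2 * (u - a * t / 2) + (2 * u - a * t) + a * t) * hy - a ^ 2 * t ^ 2 * h2i
    exact mul_left_cancel₀ h4 key
  · intro h
    apply hu
    have : 2 * u = 0 := by linear_combination h + hy + 2 * a * t * h2i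
    rcases mul_eq_zero.mp this with h' | h'
    · exact absurd h' h2
    · exact h'
end

section
/- Let q be a prime, n ≥ 1, and a an integer such that q does not divide a² − 4. Then for every unit u of the ring ℤ/qⁿℤ there exist y, t in ℤ/qⁿℤ such that y² + a*y*t + t² = u. -/
open Polynomial

private lemma base_odd (q : ℕ) (hq : q.Prime) (hq2 : q ≠ 2) (a u : ℤ)
    (ha : ¬ (q : ℤ) ∣ a ^ 2 - 4) :
    ∃ y t : ℤ, (q : ℤ) ∣ (y ^ 2 + a * y * t + t ^ 2 - u) := by
  haveI : Fact q.Prime := ⟨hq⟩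
  set A : ZMod q := (a : ZMod q) with hA
  set U : ZMod q := (u : ZMod q) with hU
  have hc : (4 : ZMod q) - A ^ 2 ≠ 0 := by
    intro h
    apply ha
    have : ((a ^ 2 - 4 : ℤ) : ZMod q) = 0 := by push_cast; linear_combination -h
    exact (ZMod.intCast_zmod_eq_zero_iff_dvd _ _).mp this
  have h2 : (2 : ZMod q) ≠ 0 := by
    intro h
    have h' : ((2 : ℕ) : ZMod q) = 0 := by exact_mod_cast h
    rw [ZMod.natCast_eq_zero_iff] at h'
    rcases (Nat.prime_two.eq_one_or_self_of_dvd q h') with h' | h'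
    · exact hq.one_lt.ne' h'
    · exact hq2 h'
  have hcardodd : Fintype.card (ZMod q) % 2 = 1 := by
    rw [ZMod.card]
    rcases hq.eq_two_or_odd with h | h
    · exact absurd h hq2
    · exact h
  obtain ⟨X, T, hXT⟩ := FiniteField.exists_root_sum_quadratic
    (f := Polynomial.X ^ 2 - Polynomial.C (4 * U))
    (g := Polynomial.C ((4 : ZMod q) - A ^ 2) * Polynomial.X ^ 2)
    (by simpa using Polynomial.degree_X_pow_sub_C (by norm_num : 0 < 2) (4 * U))
    (by rw [Polynomial.degree_C_mul hc, Polynomial.degree_X_pow]; rfl) hcardodd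
  simp only [Polynomial.eval_sub, Polynomial.eval_pow, Polynomial.eval_X, Polynomial.eval_C,
    Polynomial.eval_mul] at hXT
  set Y : ZMod q := (X - A * T) * (2 : ZMod q)⁻¹ with hY
  have h2Y : (2 : ZMod q) * Y = X - A * T := by
    rw [hY]; field_simp
  have h4 : (4 : ZMod q) ≠ 0 := by
    intro h
    apply h2
    have : (4 : ZMod q) = 2 * 2 := by norm_num
    rw [this] at h
    exact (mul_self_eq_zero).mp h
  have key : Y ^ 2 + A * Y * T + T ^ 2 = U := by
    apply mul_left_cancel₀ h4
    linear_combination (2 * Y + A * T + X) * h2Y + hXT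
  refine ⟨(Y.val : ℤ), (T.val : ℤ), ?_⟩
  rw [← ZMod.intCast_zmod_eq_zero_iff_dvd]
  push_cast
  simp only [ZMod.natCast_val, ZMod.intCast_cast, ZMod.cast_id]
  rw [← hU]; linear_combination key

private lemma lift_step (q : ℕ) (hq : q.Prime) (a u y t : ℤ) (n : ℕ) (hn : 1 ≤ n)
    (hdvd : (q : ℤ) ^ n ∣ (y ^ 2 + a * y * t + t ^ 2 - u))
    (hg : ¬ (q : ℤ) ∣ (2 * y + a * t)) :
    ∃ y' : ℤ, (q : ℤ) ^ (n + 1) ∣ (y' ^ 2 + a * y' * t + t ^ 2 - u) := by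
  haveI : Fact q.Prime := ⟨hq⟩
  obtain ⟨k, hk⟩ := hdvd
  have hgz : ((2 * y + a * t : ℤ) : ZMod q) ≠ 0 := by
    rw [Ne, ZMod.intCast_zmod_eq_zero_iff_dvd]; exact hg
  have hgz' : (2 * (y : ZMod q) + (a : ZMod q) * (t : ZMod q)) ≠ 0 := by
    push_cast at hgz; exact hgz
  set s0 : ZMod q := -(k : ZMod q) * ((2 * y + a * t : ℤ) : ZMod q)⁻¹ with hs0
  set s : ℤ := (s0.val : ℤ) with hs
  have hsol : (q : ℤ) ∣ (k + s * (2 * y + a * t)) := by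
    rw [← ZMod.intCast_zmod_eq_zero_iff_dvd]
    rw [hs, hs0]
    push_cast [ZMod.natCast_val, ZMod.cast_id]
    field_simp
    ring
  refine ⟨y + (q : ℤ) ^ n * s, ?_⟩
  obtain ⟨m, hm⟩ := hsol
  obtain ⟨w, hw⟩ := (pow_dvd_pow (q:ℤ) (by omega : n + 1 ≤ 2 * n))
  refine ⟨m + w * s ^ 2, ?_⟩
  have expand : (y + (q:ℤ)^n * s) ^ 2 + a * (y + (q:ℤ)^n * s) * t + t ^ 2 - u
      = (q:ℤ)^n * (k + s * (2*y+a*t)) + (q:ℤ)^(2*n) * s^2 := by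
    linear_combination hk + s^2 * (pow_mul (q:ℤ) 2 n).symm
  rw [expand, hm, hw]
  ring

private lemma key_int (q : ℕ) (hq : q.Prime) (a u : ℤ)
    (ha : ¬ (q : ℤ) ∣ a ^ 2 - 4) (hu : ¬ (q : ℤ) ∣ u) :
    ∀ n : ℕ, 1 ≤ n → ∃ y t : ℤ, (q : ℤ) ^ n ∣ (y ^ 2 + a * y * t + t ^ 2 - u) := by
  intro n hn
  induction n, hn using Nat.le_induction with
  | base =>
    rw [pow_one]
    by_cases hq2 : q = 2
    · subst hq2
      refine ⟨1, 0, ?_⟩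
      have h2 : ¬ (2 : ℤ) ∣ u := by exact_mod_cast hu
      have : (1:ℤ) ^ 2 + a * 1 * 0 + 0 ^ 2 - u = 1 - u := by ring
      rw [this]
      omega
    · exact base_odd q hq hq2 a u ha
  | succ n hn ih =>
    obtain ⟨y, t, hd⟩ := ih
    have hq1 : (q:ℤ) ∣ (y ^ 2 + a * y * t + t ^ 2 - u) :=
      dvd_trans (dvd_pow_self (q:ℤ) (by omega : n ≠ 0)) hd
    have hnotboth : ¬ ((q:ℤ) ∣ (2 * y + a * t) ∧ (q:ℤ) ∣ (a * y + 2 * t)) := by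
      rintro ⟨h1, h2⟩
      have hc : ¬ (q:ℤ) ∣ (4 - a ^ 2) := by
        intro h; apply ha
        have : a ^ 2 - 4 = -(4 - a ^ 2) := by ring
        rw [this]; exact dvd_neg.mpr h
      have hqp : Prime (q : ℤ) := Int.prime_iff_natAbs_prime.mpr (by simpa using hq)
      have hy : (q:ℤ) ∣ y := by
        have : (q:ℤ) ∣ (4 - a ^ 2) * y := by
          have : (4 - a ^ 2) * y = 2 * (2 * y + a * t) - a * (a * y + 2 * t) := by ring
          rw [this]; exact dvd_sub (Dvd.dvd.mul_left h1 2) (Dvd.dvd.mul_left h2 a)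
        rcases hqp.dvd_mul.mp this with h | h
        · exact absurd h hc
        · exact h
      have ht : (q:ℤ) ∣ t := by
        have : (q:ℤ) ∣ (4 - a ^ 2) * t := by
          have : (4 - a ^ 2) * t = 2 * (a * y + 2 * t) - a * (2 * y + a * t) := by ring
          rw [this]; exact dvd_sub (Dvd.dvd.mul_left h2 2) (Dvd.dvd.mul_left h1 a)
        rcases hqp.dvd_mul.mp this with h | h
        · exact absurd h hc
        · exact h
      apply hu
      have hF : (q:ℤ) ∣ (y ^ 2 + a * y * t + t ^ 2) := by
        have : y ^ 2 + a * y * t + t ^ 2 = y * y + a * y * t + t * t := by ring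
        rw [this]
        exact dvd_add (dvd_add (hy.mul_left y) ((ht.mul_left (a * y)))) (ht.mul_left t)
      have : u = (y ^ 2 + a * y * t + t ^ 2) - (y ^ 2 + a * y * t + t ^ 2 - u) := by ring
      rw [this]
      exact dvd_sub hF hq1
    by_cases hg : (q:ℤ) ∣ (2 * y + a * t)
    · have hg2 : ¬ (q:ℤ) ∣ (2 * t + a * y) := by
        intro h
        apply hnotboth
        refine ⟨hg, ?_⟩
        have e : a * y + 2 * t = 2 * t + a * y := by ring
        rw [e]; exact h
      have hd' : (q : ℤ) ^ n ∣ (t ^ 2 + a * t * y + y ^ 2 - u) := by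
        have : t ^ 2 + a * t * y + y ^ 2 - u = y ^ 2 + a * y * t + t ^ 2 - u := by ring
        rw [this]; exact hd
      obtain ⟨y', hy'⟩ := lift_step q hq a u t y n hn hd' hg2
      exact ⟨y, y', by
        have : y ^ 2 + a * y * y' + y' ^ 2 - u = y' ^ 2 + a * y' * y + y ^ 2 - u := by ring
        rw [this]; exact hy'⟩
    · obtain ⟨y', hy'⟩ := lift_step q hq a u y t n hn hd hg
      exact ⟨y', t, hy'⟩

theorem exists_representation_of_unit (q n : ℕ) (hq : q.Prime) (hn : 1 ≤ n)
    (a : ℤ) (ha : ¬ (q : ℤ) ∣ a ^ 2 - 4) (u : (ZMod (q ^ n))ˣ) :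
    ∃ y t : ZMod (q ^ n),
      y ^ 2 + (a : ZMod (q ^ n)) * y * t + t ^ 2 = (u : ZMod (q ^ n)) := by
  haveI : NeZero (q ^ n) := ⟨pow_ne_zero n hq.pos.ne'⟩
  set U : ℤ := (((u : ZMod (q ^ n)).val : ℕ) : ℤ) with hUdef
  have hu : ¬ (q : ℤ) ∣ U := by
    intro h
    have hnat : q ∣ (u : ZMod (q ^ n)).val := Int.ofNat_dvd.mp h
    have hcop : Nat.Coprime ((u : ZMod (q ^ n)).val) (q ^ n) := ZMod.val_coe_unit_coprime u
    have hq' : q ∣ q ^ n := dvd_pow_self q (by omega)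
    have : q ∣ Nat.gcd ((u : ZMod (q ^ n)).val) (q ^ n) := Nat.dvd_gcd hnat hq'
    rw [hcop] at this
    exact hq.one_lt.ne' (Nat.dvd_one.mp this)
  obtain ⟨y, t, hd⟩ := key_int q hq a U ha hu n hn
  refine ⟨(y : ZMod (q ^ n)), (t : ZMod (q ^ n)), ?_⟩
  have hz : ((y ^ 2 + a * y * t + t ^ 2 - U : ℤ) : ZMod (q ^ n)) = 0 := by
    rw [ZMod.intCast_zmod_eq_zero_iff_dvd]
    exact_mod_cast hd
  push_cast at hz
  have hUu : ((U : ℤ) : ZMod (q ^ n)) = (u : ZMod (q ^ n)) := by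
    rw [hUdef]
    push_cast
    simp [ZMod.natCast_val, ZMod.cast_id]
  rw [← hUu]

  linear_combination hz
end

section
/- Let R be a commutative ring, n a finite index type, and α, β, γ, δ n×n matrices over R with β invertible (determinant a unit). Let J be the block matrix fromBlocks 0 1 1 0 and let M = fromBlocks α β γ δ satisfy Mᵀ * J * M = J. Then: (1) the matrix δ * β⁻¹ is skew-symmetric, i.e. (δ * β⁻¹)ᵀ = −(δ * β⁻¹); and (2) for any n×n matrix φ, the block matrix (fromBlocks 1 0 φ 1) * M * (fromBlocks 1 0 (−φ) 1) has its bottom-right n×n block equal to 0 if and only if φ = −δ * β⁻¹. In particular there is exactly one matrix φ, necessarily skew-symmetric, of this form conjugating M into a matrix with vanishing bottom-right block. -/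
open Matrix

theorem unique_conjugating_matrix {R : Type*} [CommRing R]
    {n : Type*} [Fintype n] [DecidableEq n] (α β γ δ : Matrix n n R)
    (hβ : IsUnit β.det)
    (hM : (Matrix.fromBlocks α β γ δ)ᵀ * Matrix.fromBlocks (0 : Matrix n n R) 1 1 0 *
        Matrix.fromBlocks α β γ δ = Matrix.fromBlocks (0 : Matrix n n R) 1 1 0) :
    (δ * β⁻¹)ᵀ = -(δ * β⁻¹) ∧
    ∀ φ : Matrix n n R,
      (Matrix.fromBlocks 1 0 φ 1 * Matrix.fromBlocks α β γ δ *
          Matrix.fromBlocks 1 0 (-φ) 1).toBlocks₂₂ = 0 ↔ φ = -(δ * β⁻¹) := by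
  have hβT : IsUnit βᵀ.det := by simpa [Matrix.det_transpose] using hβ
  have hbd : δᵀ * β + βᵀ * δ = 0 := by
    have h := congrArg Matrix.toBlocks₂₂ hM
    simpa [Matrix.fromBlocks_transpose, Matrix.fromBlocks_multiply,
      Matrix.toBlocks_fromBlocks₂₂] using h
  have hδT : δᵀ = -(βᵀ * δ * β⁻¹) := by
    have h1 : δᵀ * β = -(βᵀ * δ) := by
      have := hbd
      linear_combination (norm := noncomm_ring) hbd
    calc δᵀ = δᵀ * β * β⁻¹ := by
            rw [Matrix.mul_assoc, Matrix.mul_nonsing_inv β hβ, Matrix.mul_one]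
      _ = -(βᵀ * δ * β⁻¹) := by rw [h1]; noncomm_ring
  have hskew : (δ * β⁻¹)ᵀ = -(δ * β⁻¹) := by
    rw [Matrix.transpose_mul, Matrix.transpose_nonsing_inv, hδT]
    calc (βᵀ)⁻¹ * -(βᵀ * δ * β⁻¹) = -((βᵀ)⁻¹ * βᵀ * (δ * β⁻¹)) := by noncomm_ring
      _ = -(δ * β⁻¹) := by rw [Matrix.nonsing_inv_mul βᵀ hβT, Matrix.one_mul]
  refine ⟨hskew, fun φ => ?_⟩
  have hblock : (Matrix.fromBlocks 1 0 φ 1 * Matrix.fromBlocks α β γ δ *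
      Matrix.fromBlocks 1 0 (-φ) 1).toBlocks₂₂ = φ * β + δ := by
    simp [Matrix.fromBlocks_multiply, Matrix.toBlocks_fromBlocks₂₂]
  rw [hblock]
  constructor
  · intro h
    have hφβ : φ * β = -δ := by linear_combination (norm := noncomm_ring) h
    calc φ = φ * β * β⁻¹ := by
          rw [Matrix.mul_assoc, Matrix.mul_nonsing_inv β hβ, Matrix.mul_one]
      _ = -(δ * β⁻¹) := by rw [hφβ]; noncomm_ring
  · intro h
    subst h
    have : δ * β⁻¹ * β = δ := by
      rw [Matrix.mul_assoc, Matrix.nonsing_inv_mul β hβ, Matrix.mul_one]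
    calc -(δ * β⁻¹) * β + δ = -(δ * β⁻¹ * β) + δ := by noncomm_ring
      _ = 0 := by rw [this]; exact neg_add_cancel δ
end

section
/- Let R be a commutative ring in which 3 is a unit, let M be an R-module, and let f : M → M be an R-linear map with f ∘ f ∘ f = −id. Then: (1) the kernel of (f + id) equals the kernel of (f + id)²; (2) the kernel of (f + id) and the range of (f + id) are complementary submodules of M (their intersection is trivial and their sum is all of M); and (3) for every m in the range of (f + id), f(f(m)) = f(m) − m. -/
theorem decomposition_of_cube_neg_id {R : Type*} [CommRing R] (h3 : IsUnit (3 : R))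
    {M : Type*} [AddCommGroup M] [Module R M]
    (f : M →ₗ[R] M) (hf : f ∘ₗ f ∘ₗ f = -LinearMap.id) :
    LinearMap.ker (f + LinearMap.id) =
      LinearMap.ker ((f + LinearMap.id) ∘ₗ (f + LinearMap.id)) ∧
    IsCompl (LinearMap.ker (f + LinearMap.id)) (LinearMap.range (f + LinearMap.id)) ∧
    ∀ m ∈ LinearMap.range (f + LinearMap.id), f (f m) = f m - m := by
  obtain ⟨c, hc⟩ := h3.exists_right_inv
  have hcube : ∀ x : M, f (f (f x)) = -x := by
    intro x
    simpa using LinearMap.ext_iff.mp hf x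
  -- part 3
  have part3 : ∀ m ∈ LinearMap.range (f + LinearMap.id), f (f m) = f m - m := by
    intro m hm
    obtain ⟨y, hy⟩ := hm
    simp only [LinearMap.add_apply, LinearMap.id_apply] at hy
    rw [← hy]
    simp only [map_add]
    rw [hcube]
    abel
  -- disjointness
  have hdisj : Disjoint (LinearMap.ker (f + LinearMap.id))
      (LinearMap.range (f + LinearMap.id)) := by
    rw [Submodule.disjoint_def]
    intro x hx hxr
    obtain ⟨y, hy⟩ := hxr
    simp only [LinearMap.mem_ker, LinearMap.add_apply, LinearMap.id_apply] at hx hy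
    have hfx : f x = -x := eq_neg_of_add_eq_zero_left hx
    have h1 : f (f x) - f x + x = (3 : R) • x := by
      rw [hfx, map_neg, hfx, neg_neg]
      module
    have h2 : f (f x) - f x + x = 0 := by
      rw [← hy]
      simp only [map_add]
      rw [hcube]
      abel
    rw [h1] at h2
    calc x = c • ((3 : R) • x) := by rw [smul_smul, mul_comm, hc, one_smul]
    _ = 0 := by rw [h2, smul_zero]
  have hcod : Codisjoint (LinearMap.ker (f + LinearMap.id))
      (LinearMap.range (f + LinearMap.id)) := by
    rw [codisjoint_iff, eq_top_iff]
    intro x _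
    refine Submodule.mem_sup.mpr ⟨c • (f (f x) - f x + x), ?_, f (c • ((2:R) • x - f x)) + c • ((2:R) • x - f x), ?_, ?_⟩
    · simp only [LinearMap.mem_ker, LinearMap.add_apply, LinearMap.id_apply, map_smul,
        map_add, map_sub, hcube]
      module
    · exact ⟨c • ((2:R) • x - f x), by simp⟩
    · have : c • (f (f x) - f x + x) + (c • ((2:R) • f x - f (f x)) + c • ((2:R) • x - f x))
          = (c * 3) • x := by module
      rw [map_smul, map_sub, map_smul, this, mul_comm, hc, one_smul]
  refine ⟨?_, ⟨hdisj, hcod⟩, part3⟩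
  apply le_antisymm
  · intro x hx
    simp only [LinearMap.mem_ker] at hx ⊢
    rw [LinearMap.comp_apply, hx, map_zero]
  · intro x hx
    simp only [LinearMap.mem_ker, LinearMap.comp_apply] at hx ⊢
    have := hdisj.le_bot ⟨hx, ⟨x, rfl⟩⟩
    simpa using this
end

section
/- Let R be a (possibly noncommutative) ring and let α, y be elements of R. If the 2×2 matrix !![α, 1; y, 0] over R satisfies M³ = 1 (the identity matrix), then y * α = 1, α * y = 1, and α³ = −1. -/
open Matrix

theorem cube_eq_one_of_companion {R : Type*} [Ring R] (α y : R)
    (h : (!![α, 1; y, 0] : Matrix (Fin 2) (Fin 2) R) ^ 3 = 1) :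
    y * α = 1 ∧ α * y = 1 ∧ α ^ 3 = -1 := by
  rw [pow_succ, pow_two] at h
  have h00 := congr_fun (congr_fun h 0) 0
  have h01 := congr_fun (congr_fun h 0) 1
  have h11 := congr_fun (congr_fun h 1) 1
  simp [Matrix.mul_apply, Fin.sum_univ_two, Matrix.one_apply] at h00 h01 h11
  refine ⟨h11, ?_, ?_⟩
  · rwa [h01, zero_mul, zero_add] at h00
  · have hy : y = -(α * α) := eq_neg_of_add_eq_zero_right h01
    rw [hy, neg_mul] at h11
    rw [pow_succ, pow_two]
    exact neg_eq_iff_eq_neg.mp h11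
end

section
/- Let q be a prime, p an odd prime, and F a field of characteristic q. Let ζ be a nonzero element of F whose multiplicative order is p. Then (ζ + ζ⁻¹)^q = ζ + ζ⁻¹ if and only if p divides q² − 1. (Equivalently, ζ + ζ⁻¹ is fixed by the Frobenius endomorphism, i.e. lies in the prime subfield 𝔽_q, if and only if p ∣ q² − 1.) -/
theorem frobenius_fixes_sum_iff (q p : ℕ) (hq : q.Prime) (hp : p.Prime) (hodd : Odd p)
    {F : Type*} [Field F] [CharP F q] (ζ : F) (hζ : ζ ≠ 0) (hord : orderOf ζ = p) :
    (ζ + ζ⁻¹) ^ q = ζ + ζ⁻¹ ↔ p ∣ q ^ 2 - 1 := by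
  haveI : Fact q.Prime := ⟨hq⟩
  have hq1 : 1 ≤ q := hq.one_lt.le
  have hfrob : (ζ + ζ⁻¹) ^ q = ζ ^ q + (ζ ^ q)⁻¹ := by
    rw [add_pow_char, inv_pow]
  have hfact : q ^ 2 - 1 = (q - 1) * (q + 1) := by
    cases q with
    | zero => simp
    | succ n =>
      have : (n + 1) ^ 2 = n ^ 2 + 2 * n + 1 := by ring
      have : (n + 1 - 1) * (n + 1 + 1) = n ^ 2 + 2 * n := by simp; ring
      omega
  constructor
  · intro h
    rw [hfrob] at h
    have hζq : ζ ^ q ≠ 0 := pow_ne_zero _ hζ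
    have key : (ζ ^ q - ζ) * (ζ ^ q - ζ⁻¹) = 0 := by
      have := congrArg (· * ζ ^ q) h
      field_simp at this ⊢
      ring_nf
      ring_nf at this
      linear_combination this
    rcases mul_eq_zero.mp key with h1 | h2
    · have : ζ ^ (q - 1) = 1 := by
        have hz : ζ ^ q = ζ := sub_eq_zero.mp h1
        have : ζ ^ (q - 1) * ζ = ζ := by
          rw [← pow_succ]
          rw [Nat.sub_add_cancel hq1, hz]
        field_simp at this
        exact this
      have hd : p ∣ q - 1 := hord ▸ orderOf_dvd_of_pow_eq_one this
      exact hfact ▸ hd.mul_right _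
    · have : ζ ^ (q + 1) = 1 := by
        have hz : ζ ^ q = ζ⁻¹ := sub_eq_zero.mp h2
        rw [pow_succ, hz, inv_mul_cancel₀ hζ]
      have hd : p ∣ q + 1 := hord ▸ orderOf_dvd_of_pow_eq_one this
      exact hfact ▸ hd.mul_left _
  · intro h
    rw [hfact] at h
    rcases (Nat.Prime.dvd_mul hp).mp h with h1 | h2
    · have : ζ ^ (q - 1) = 1 := by
        rw [← hord] at h1; exact orderOf_dvd_iff_pow_eq_one.mp h1
      have hz : ζ ^ q = ζ := by
        calc ζ ^ q = ζ ^ (q - 1) * ζ := by rw [← pow_succ, Nat.sub_add_cancel hq1]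
        _ = ζ := by rw [this, one_mul]
      rw [hfrob, hz]
    · have : ζ ^ (q + 1) = 1 := by
        rw [← hord] at h2; exact orderOf_dvd_iff_pow_eq_one.mp h2
      have hz : ζ ^ q = ζ⁻¹ :=
        eq_inv_of_mul_eq_one_left (by rw [← pow_succ]; exact this)
      rw [hfrob, hz, inv_inv, add_comm]
end

section
/- Let p be an odd prime. Consider the set T of pairs (ξ, {a, b}) where ξ is an element of ℤ/pℤ and {a, b} is an unordered pair of elements of ℤ/pℤ with a ≠ b and a + b ≠ 0. The group (ℤ/pℤ)ˣ of units acts on T by g · (ξ, {a, b}) = (g⁻² * ξ, {g * a, g * b}). Then the number of orbits of this action equals (p² − p)/2. -/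
/-- The sum of the two entries of an unordered pair. -/
def Sym2.pairSum {α : Type*} [AddCommMonoid α] : Sym2 α → α :=
  Sym2.lift ⟨fun a b => a + b, fun a b => add_comm a b⟩

/-- The square of the difference of the two entries of an unordered pair. -/
def Sym2.pairDiffSq {α : Type*} [CommRing α] : Sym2 α → α :=
  Sym2.lift ⟨fun a b => (a - b) ^ 2, fun a b => by ring⟩

@[simp] lemma Sym2.pairSum_mk {α : Type*} [AddCommMonoid α] (a b : α) :
    Sym2.pairSum s(a, b) = a + b := rfl

@[simp] lemma Sym2.pairDiffSq_mk {α : Type*} [CommRing α] (a b : α) :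
    Sym2.pairDiffSq s(a, b) = (a - b) ^ 2 := rfl

lemma Sym2.pairSum_map {α : Type*} [CommRing α] (g : α) (z : Sym2 α) :
    Sym2.pairSum (Sym2.map (fun a => g * a) z) = g * Sym2.pairSum z := by
  induction z using Sym2.ind with
  | _ a b => simp [mul_add]

lemma Sym2.pairDiffSq_map {α : Type*} [CommRing α] (g : α) (z : Sym2 α) :
    Sym2.pairDiffSq (Sym2.map (fun a => g * a) z) = g ^ 2 * Sym2.pairDiffSq z := by
  induction z using Sym2.ind with
  | _ a b => simp only [Sym2.map_pair_eq, Sym2.pairDiffSq_mk]; ring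

/-- Two unordered pairs with the same sum and same squared difference coincide
(in a field where 2 ≠ 0). -/
lemma sym2_eq_of_sum_diffSq {K : Type*} [Field K] (h2 : (2 : K) ≠ 0)
    {z w : Sym2 K} (hs : Sym2.pairSum z = Sym2.pairSum w)
    (hd : Sym2.pairDiffSq z = Sym2.pairDiffSq w) : z = w := by
  induction z using Sym2.ind with
  | _ a b =>
    induction w using Sym2.ind with
    | _ c d =>
      simp only [Sym2.pairSum_mk, Sym2.pairDiffSq_mk] at hs hd
      have key : ((a - b) - (c - d)) * ((a - b) + (c - d)) = 0 := by
        linear_combination hd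
      rcases mul_eq_zero.mp key with h | h
      · have hac : 2 * a = 2 * c := by linear_combination hs + h
        have hac' : a = c := mul_left_cancel₀ h2 hac
        have hbd : b = d := by linear_combination hs - hac'
        rw [hac', hbd]
      · have had : 2 * a = 2 * d := by linear_combination hs + h
        have had' : a = d := mul_left_cancel₀ h2 had
        have hbc : b = c := by linear_combination hs - had'
        rw [had', hbc, Sym2.eq_swap]

section Main

abbrev Tp (p : ℕ) := ZMod p × {z : Sym2 (ZMod p) // ¬ z.IsDiag ∧ Sym2.pairSum z ≠ 0}

variable (p : ℕ) [Fact p.Prime]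

lemma pairDiffSq_ne_zero {z : Sym2 (ZMod p)} (h : ¬ z.IsDiag) :
    Sym2.pairDiffSq z ≠ 0 := by
  induction z using Sym2.ind with
  | _ a b =>
    rw [Sym2.mk_isDiag_iff] at h
    simpa [sub_eq_zero] using pow_ne_zero 2 (sub_ne_zero.mpr h)

/-- The invariant map. -/
noncomputable def phi (t : Tp p) : ZMod p × ZMod p :=
  ((Sym2.pairSum (t.2 : Sym2 (ZMod p))) ^ 2 * t.1,
    Sym2.pairDiffSq (t.2 : Sym2 (ZMod p)) / (Sym2.pairSum (t.2 : Sym2 (ZMod p))) ^ 2)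

lemma phi_snd_ne_zero (t : Tp p) : (phi p t).2 ≠ 0 :=
  div_ne_zero (pairDiffSq_ne_zero p t.2.2.1) (pow_ne_zero 2 t.2.2.2)

lemma phi_snd_isSquare (t : Tp p) : IsSquare (phi p t).2 := by
  obtain ⟨ξ, z, hz⟩ := t
  induction z using Sym2.ind with
  | _ a b =>
    refine ⟨(a - b) / Sym2.pairSum s(a, b), ?_⟩
    simp only [phi, Sym2.pairDiffSq_mk]
    rw [div_mul_div_comm, ← sq, ← sq]

theorem card_quot (h2 : (2 : ZMod p) ≠ 0) :
    Nat.card (Quot (fun t₁ t₂ :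
        ZMod p × {z : Sym2 (ZMod p) // ¬ z.IsDiag ∧ Sym2.pairSum z ≠ 0} =>
      ∃ g : (ZMod p)ˣ,
        t₂.1 = ((g⁻¹ : (ZMod p)ˣ) : ZMod p) ^ 2 * t₁.1 ∧
        (t₂.2 : Sym2 (ZMod p)) =
          Sym2.map (fun a => (g : ZMod p) * a) (t₁.2 : Sym2 (ZMod p)))) =
    Nat.card (ZMod p × {u : ZMod p // u ≠ 0 ∧ IsSquare u}) := by
  set r : Tp p → Tp p → Prop := fun t₁ t₂ =>
      ∃ g : (ZMod p)ˣ,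
        t₂.1 = ((g⁻¹ : (ZMod p)ˣ) : ZMod p) ^ 2 * t₁.1 ∧
        (t₂.2 : Sym2 (ZMod p)) =
          Sym2.map (fun a => (g : ZMod p) * a) (t₁.2 : Sym2 (ZMod p)) with hr
  have hwd : ∀ t₁ t₂ : Tp p, r t₁ t₂ → phi p t₁ = phi p t₂ := by
    rintro ⟨ξ₁, z₁, hz₁⟩ ⟨ξ₂, z₂, hz₂⟩ ⟨g, h1, hmap⟩
    dsimp only at h1 hmap
    have hg : (g : ZMod p) ≠ 0 := g.ne_zero
    have hsm : Sym2.pairSum z₂ = (g : ZMod p) * Sym2.pairSum z₁ := by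
      rw [hmap, Sym2.pairSum_map]
    have hdm : Sym2.pairDiffSq z₂ = (g : ZMod p) ^ 2 * Sym2.pairDiffSq z₁ := by
      rw [hmap, Sym2.pairDiffSq_map]
    have hginv : ((g⁻¹ : (ZMod p)ˣ) : ZMod p) = (g : ZMod p)⁻¹ :=
      Units.val_inv_eq_inv_val g
    simp only [phi, hsm, hdm, h1, hginv, Prod.mk.injEq]
    constructor
    · field_simp
    · rw [mul_pow, mul_div_mul_left _ _ (pow_ne_zero 2 hg)]
  have hinj : ∀ t₁ t₂ : Tp p, phi p t₁ = phi p t₂ → r t₁ t₂ := by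
    rintro ⟨ξ₁, z₁, hz₁⟩ ⟨ξ₂, z₂, hz₂⟩ h
    simp only [phi, Prod.mk.injEq] at h
    obtain ⟨hfst, hsnd⟩ := h
    set s₁ := Sym2.pairSum z₁ with hs₁
    set s₂ := Sym2.pairSum z₂ with hs₂
    have hs₁0 : s₁ ≠ 0 := hz₁.2
    have hs₂0 : s₂ ≠ 0 := hz₂.2
    refine ⟨Units.mk0 s₂ hs₂0 * (Units.mk0 s₁ hs₁0)⁻¹, ?_, ?_⟩
    · simp only [mul_inv_rev, inv_inv, Units.val_mul, Units.val_mk0,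
        Units.val_inv_eq_inv_val]
      field_simp
      linear_combination -hfst
    · apply sym2_eq_of_sum_diffSq h2
      · rw [Sym2.pairSum_map]
        simp only [Units.val_mul, Units.val_mk0, Units.val_inv_eq_inv_val]
        field_simp
        rw [hs₁, hs₂]
      · rw [Sym2.pairDiffSq_map]
        simp only [Units.val_mul, Units.val_mk0, Units.val_inv_eq_inv_val]
        field_simp at hsnd ⊢
        linear_combination -hsnd
  apply Nat.card_eq_of_bijective
    (Quot.lift (fun t : Tp p => ((phi p t).1,
      (⟨(phi p t).2, phi_snd_ne_zero p t, phi_snd_isSquare p t⟩ :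
        {u : ZMod p // u ≠ 0 ∧ IsSquare u}))) (fun t₁ t₂ h => by
          have := hwd t₁ t₂ h
          simp [this]))
  constructor
  · rintro q₁ q₂
    induction q₁ using Quot.ind with
    | _ t₁ =>
      induction q₂ using Quot.ind with
      | _ t₂ =>
        intro h
        have h1 := congrArg (fun x : ZMod p × {u : ZMod p // u ≠ 0 ∧ IsSquare u} =>
          x.1) h
        have h2' := congrArg (fun x : ZMod p × {u : ZMod p // u ≠ 0 ∧ IsSquare u} =>
          (x.2 : ZMod p)) h
        exact Quot.sound (hinj t₁ t₂ (Prod.ext_iff.mpr ⟨h1, h2'⟩))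
  · rintro ⟨ξ, u, hu0, r', hr'⟩
    have hr0 : r' ≠ 0 := by
      rintro rfl; exact hu0 (by simpa using hr')
    set a : ZMod p := (1 + r') / 2 with ha
    set b : ZMod p := (1 - r') / 2 with hb
    have hab_sum : a + b = 1 := by
      rw [ha, hb]; field_simp; ring
    have hab_sub : a - b = r' := by
      rw [ha, hb]; field_simp; ring
    have hne : a ≠ b := fun h => hr0 (by rw [← hab_sub, h, sub_self])
    refine ⟨Quot.mk _ ((ξ, ⟨s(a, b), by simpa [Sym2.mk_isDiag_iff] using hne,
      by simp [hab_sum]⟩) : Tp p), ?_⟩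
    refine Prod.ext_iff.mpr ⟨?_, Subtype.ext ?_⟩
    · simp [phi, hab_sum]
    · simp only [phi, Sym2.pairSum_mk, Sym2.pairDiffSq_mk, hab_sum, hab_sub]
      simp [hr', pow_two]

theorem card_sq (h2 : 2 < p) :
    Nat.card {u : ZMod p // u ≠ 0 ∧ IsSquare u} = (p - 1) / 2 := by
  haveI : Fact (2 < p) := ⟨h2⟩
  set f : (ZMod p)ˣ →* (ZMod p)ˣ := powMonoidHom 2 with hf
  have hcard : Nat.card {u : ZMod p // u ≠ 0 ∧ IsSquare u} = Nat.card f.range := by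
    symm
    apply Nat.card_eq_of_bijective
      (fun w : f.range => (⟨((w : (ZMod p)ˣ) : ZMod p), (w : (ZMod p)ˣ).ne_zero, by
        obtain ⟨v, hv⟩ := w.2
        have hv' : v ^ 2 = (w : (ZMod p)ˣ) := by simpa [hf, powMonoidHom_apply] using hv
        refine ⟨(v : ZMod p), ?_⟩
        rw [← hv']
        push_cast
        ring⟩ : {u : ZMod p // u ≠ 0 ∧ IsSquare u}))
    constructor
    · rintro ⟨w₁, hw₁⟩ ⟨w₂, hw₂⟩ h
      simp only [Subtype.mk.injEq] at h
      exact Subtype.ext (Units.ext h)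
    · rintro ⟨u, hu0, r, hr⟩
      have hr0 : r ≠ 0 := by rintro rfl; exact hu0 (by simpa using hr)
      have hmem : Units.mk0 u hu0 ∈ f.range := by
        refine ⟨Units.mk0 r hr0, ?_⟩
        apply Units.ext
        simp only [hf, powMonoidHom_apply, Units.val_pow_eq_pow_val, Units.val_mk0]
        rw [pow_two]; exact hr.symm
      exact ⟨⟨Units.mk0 u hu0, hmem⟩, rfl⟩
  have hker : Nat.card f.ker = 2 := by
    rw [Nat.card_eq_two_iff]
    refine ⟨⟨1, by simp [hf, MonoidHom.mem_ker, powMonoidHom_apply]⟩,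
      ⟨-1, by simp [hf, MonoidHom.mem_ker, powMonoidHom_apply]⟩, ?_, ?_⟩
    · intro h
      have h' : (1 : (ZMod p)ˣ) = -1 := by
        simpa [Subtype.ext_iff] using h
      have h'' : (1 : ZMod p) = -1 := by
        have := congrArg (fun x : (ZMod p)ˣ => (x : ZMod p)) h'
        simpa using this
      exact ZMod.neg_one_ne_one h''.symm
    · rw [Set.eq_univ_iff_forall]
      rintro ⟨x, hx⟩
      have hx2 : x ^ 2 = 1 := by
        simpa [hf, MonoidHom.mem_ker, powMonoidHom_apply] using hx
      have hx' : (x : ZMod p) ^ 2 = 1 := by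
        rw [← Units.val_pow_eq_pow_val, hx2, Units.val_one]
      rcases sq_eq_one_iff.mp hx' with h | h
      · left; exact Subtype.ext (Units.ext (by simpa using h))
      · right
        simp only [Set.mem_insert_iff, Set.mem_singleton_iff]
        exact Subtype.ext (Units.ext (by simpa using h))
  have hidx := Subgroup.index_ker f
  have hmi := Subgroup.card_mul_index f.ker
  rw [hidx, hker] at hmi
  have hcu : Nat.card (ZMod p)ˣ = p - 1 := by
    rw [Nat.card_eq_fintype_card, ZMod.card_units]
  rw [hcu] at hmi
  omega

end Main

theorem card_orbits_of_unit_action (p : ℕ) (hp : p.Prime) (hodd : Odd p) :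
    Nat.card (Quot (fun t₁ t₂ :
        ZMod p × {z : Sym2 (ZMod p) // ¬ z.IsDiag ∧ Sym2.pairSum z ≠ 0} =>
      ∃ g : (ZMod p)ˣ,
        t₂.1 = ((g⁻¹ : (ZMod p)ˣ) : ZMod p) ^ 2 * t₁.1 ∧
        (t₂.2 : Sym2 (ZMod p)) =
          Sym2.map (fun a => (g : ZMod p) * a) (t₁.2 : Sym2 (ZMod p)))) =
    (p ^ 2 - p) / 2 := by
  haveI : Fact p.Prime := ⟨hp⟩
  have hp2 : p ≠ 2 := by
    rintro rfl; exact (by decide : ¬ Odd 2) hodd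
  have h2lt : 2 < p := lt_of_le_of_ne hp.two_le (Ne.symm hp2)
  have h2 : (2 : ZMod p) ≠ 0 := by
    have : ((2 : ℕ) : ZMod p) ≠ 0 := by
      rw [Ne, ZMod.natCast_eq_zero_iff]
      intro h
      exact hp2 ((Nat.prime_dvd_prime_iff_eq hp Nat.prime_two).mp h)
    simpa using this
  rw [card_quot p h2, Nat.card_prod, Nat.card_zmod, card_sq p h2lt]
  obtain ⟨k, hk⟩ := hodd
  subst hk
  have e1 : 2 * k + 1 - 1 = 2 * k := by omega
  have e2 : (2 * k + 1) ^ 2 - (2 * k + 1) = 2 * ((2 * k + 1) * k) := by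
    have : (2 * k + 1) ^ 2 = 2 * ((2 * k + 1) * k) + (2 * k + 1) := by ring
    omega
  rw [e1, e2, Nat.mul_div_cancel_left _ (by norm_num : 0 < 2),
    Nat.mul_div_cancel_left _ (by norm_num : 0 < 2)]
end
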